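/- For all real T > 0 and b, d ∈ ℝ, ∫₀ᵀ [ t²/T − ((2t−T)²/T)·1_{[T/2,T)}(t) + (b·t/T − d·((2t−T)/T)·1_{[T/2,T)}(t))² ] dt = (1/6)(d−b)²T + (1/6)b²T − (1/12)dbT + (1/6)T². -/

import Mathlib

set_option linter.unnecessarySimpa false

open MeasureTheory intervalIntegral Set
open scoped Interval

theorem cond_quad_dev_st (T b d : ℝ) (hT : 0 < T) :
    ∫ t in (0:ℝ)..T,
        (t ^ 2 / T
          - ((2 * t - T) ^ 2 / T) * Set.indicator (Set.Ico (T / 2) T) (fun _ => (1:ℝ)) t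
          + (b * t / T
              - d * ((2 * t - T) / T)
                * Set.indicator (Set.Ico (T / 2) T) (fun _ => (1:ℝ)) t) ^ 2)
      = 1 / 6 * (d - b) ^ 2 * T + 1 / 6 * b ^ 2 * T - 1 / 12 * d * b * T
        + 1 / 6 * T ^ 2 := by
  have hT' : T ≠ 0 := ne_of_gt hT
  have hhalf : (0:ℝ) ≤ T / 2 := by linarith
  have hhalf2 : T / 2 ≤ T := by linarith
  set f : ℝ → ℝ := fun t =>
      t ^ 2 / T
        - ((2 * t - T) ^ 2 / T) * Set.indicator (Set.Ico (T / 2) T) (fun _ => (1:ℝ)) t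
        + (b * t / T
            - d * ((2 * t - T) / T)
              * Set.indicator (Set.Ico (T / 2) T) (fun _ => (1:ℝ)) t) ^ 2 with hfdef
  set g1 : ℝ → ℝ := fun t => t ^ 2 / T + (b * t / T) ^ 2 with hg1def
  set g2 : ℝ → ℝ := fun t =>
      t ^ 2 / T - (2 * t - T) ^ 2 / T + (b * t / T - d * ((2 * t - T) / T)) ^ 2 with hg2def
  -- a.e. equalities on the two halves
  have hne1 : ∀ᵐ x : ℝ, x ≠ T / 2 := by
    have : (volume : Measure ℝ) {T / 2} = 0 := measure_singleton _
    rw [ae_iff]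
    simpa [Classical.not_not] using this
  have hne2 : ∀ᵐ x : ℝ, x ≠ T := by
    have : (volume : Measure ℝ) {T} = 0 := measure_singleton _
    rw [ae_iff]
    simpa [Classical.not_not] using this
  have hae1 : ∀ᵐ x : ℝ, x ∈ Ι (0:ℝ) (T / 2) → f x = g1 x := by
    filter_upwards [hne1] with x hx hmem
    rw [Set.uIoc_of_le hhalf] at hmem
    have hlt : x < T / 2 := lt_of_le_of_ne hmem.2 hx
    have hnot : x ∉ Set.Ico (T / 2) T := fun h => absurd h.1 (not_le.2 hlt)
    simp only [hfdef, hg1def, Set.indicator_of_notMem hnot]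
    ring
  have hae2 : ∀ᵐ x : ℝ, x ∈ Ι (T / 2) T → f x = g2 x := by
    filter_upwards [hne2] with x hx hmem
    rw [Set.uIoc_of_le hhalf2] at hmem
    have hlt : x < T := lt_of_le_of_ne hmem.2 hx
    have hmem' : x ∈ Set.Ico (T / 2) T := ⟨le_of_lt hmem.1, hlt⟩
    simp only [hfdef, hg2def, Set.indicator_of_mem hmem']
    ring
  have hc1 : Continuous g1 := by
    simp only [hg1def]; fun_prop
  have hc2 : Continuous g2 := by
    simp only [hg2def]; fun_prop
  have hre1 : f =ᵐ[volume.restrict (Ι (0:ℝ) (T/2))] g1 :=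
    (ae_restrict_iff' measurableSet_uIoc).2 hae1
  have hre2 : f =ᵐ[volume.restrict (Ι (T/2) T)] g2 :=
    (ae_restrict_iff' measurableSet_uIoc).2 hae2
  have hi1 : IntervalIntegrable f volume 0 (T / 2) :=
    (hc1.intervalIntegrable _ _).congr_ae hre1.symm
  have hi2 : IntervalIntegrable f volume (T / 2) T :=
    (hc2.intervalIntegrable _ _).congr_ae hre2.symm
  have hsplit : ∫ t in (0:ℝ)..T, f t
      = (∫ t in (0:ℝ)..(T / 2), f t) + ∫ t in (T / 2)..T, f t :=
    (intervalIntegral.integral_add_adjacent_intervals hi1 hi2).symm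
  have heq1 : ∫ t in (0:ℝ)..(T / 2), f t = ∫ t in (0:ℝ)..(T / 2), g1 t :=
    intervalIntegral.integral_congr_ae hae1
  have heq2 : ∫ t in (T / 2)..T, f t = ∫ t in (T / 2)..T, g2 t :=
    intervalIntegral.integral_congr_ae hae2
  -- explicit antiderivatives
  have hval1 : ∫ t in (0:ℝ)..(T / 2), g1 t
      = (1 / (3 * T) + b ^ 2 / (3 * T ^ 2)) * (T / 2) ^ 3
        - (1 / (3 * T) + b ^ 2 / (3 * T ^ 2)) * (0:ℝ) ^ 3 := by
    apply intervalIntegral.integral_eq_sub_of_hasDerivAt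
      (f := fun x => (1 / (3 * T) + b ^ 2 / (3 * T ^ 2)) * x ^ 3)
    · intro x _
      have h := (hasDerivAt_pow 3 x).const_mul (1 / (3 * T) + b ^ 2 / (3 * T ^ 2))
      convert h using 1
      all_goals try rfl
      simp only [hg1def]
      push_cast
      field_simp
    · exact hc1.intervalIntegrable _ _
  have hval2 : ∫ t in (T / 2)..T, g2 t
      = ((d ^ 2 - T) * T + (2 + (b * d - 2 * d ^ 2) / T) * T ^ 2
            + ((4 * d ^ 2 - 4 * b * d + b ^ 2) / (3 * T ^ 2) - 1 / T) * T ^ 3)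
        - ((d ^ 2 - T) * (T / 2) + (2 + (b * d - 2 * d ^ 2) / T) * (T / 2) ^ 2
            + ((4 * d ^ 2 - 4 * b * d + b ^ 2) / (3 * T ^ 2) - 1 / T) * (T / 2) ^ 3) := by
    apply intervalIntegral.integral_eq_sub_of_hasDerivAt
      (f := fun x => (d ^ 2 - T) * x + (2 + (b * d - 2 * d ^ 2) / T) * x ^ 2
        + ((4 * d ^ 2 - 4 * b * d + b ^ 2) / (3 * T ^ 2) - 1 / T) * x ^ 3)
    · intro x _
      have h := (((hasDerivAt_id x).const_mul (d ^ 2 - T)).add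
          ((hasDerivAt_pow 2 x).const_mul (2 + (b * d - 2 * d ^ 2) / T))).add
          ((hasDerivAt_pow 3 x).const_mul
            ((4 * d ^ 2 - 4 * b * d + b ^ 2) / (3 * T ^ 2) - 1 / T))
      convert h using 1
      all_goals try rfl
      simp only [hg2def]
      push_cast
      field_simp
      ring
    · exact hc2.intervalIntegrable _ _
  rw [hsplit, heq1, heq2, hval1, hval2]
  field_simp
  ring
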